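/- arXiv:1007.4319 — 2 statements merged into one kernel-verified Lean document; each statement's English description precedes it below -/
import Mathlib

section
/- Let X, Y, Z be Banach spaces with X compactly embedded into Z, and let L : X → Y be a bounded linear operator. If there exists C such that ‖u‖_X ≤ C(‖L u‖_Y + ‖u‖_Z) for all u ∈ X, then the kernel of L is finite-dimensional and the range of L is closed in Y. -/
open Filter Topology Metric

/-- Key compactness lemma: a bounded sequence whose image under `L` is Cauchy has a
convergent subsequence, thanks to the compactness of `J` and the a priori estimate. -/
private lemma peetre_key {X Y Z : Type*} [NormedAddCommGroup X] [NormedSpace ℝ X]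
    [CompleteSpace X] [NormedAddCommGroup Y] [NormedSpace ℝ Y]
    [NormedAddCommGroup Z] [NormedSpace ℝ Z]
    (J : X →L[ℝ] Z) (hJcpt : IsCompactOperator J)
    (L : X →L[ℝ] Y) (C : ℝ)
    (hC : ∀ u : X, ‖u‖ ≤ C * (‖L u‖ + ‖J u‖))
    (x : ℕ → X) (M : ℝ) (hM : ∀ n, ‖x n‖ ≤ M)
    (hL : CauchySeq fun n => L (x n)) :
    ∃ u : X, ∃ φ : ℕ → ℕ, StrictMono φ ∧ Tendsto (x ∘ φ) atTop (𝓝 u) := by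
  set C' : ℝ := max C 1 with hC'def
  have hC'pos : 0 < C' := lt_of_lt_of_le one_pos (le_max_right _ _)
  have hC' : ∀ u : X, ‖u‖ ≤ C' * (‖L u‖ + ‖J u‖) := fun u =>
    (hC u).trans (mul_le_mul_of_nonneg_right (le_max_left _ _)
      (add_nonneg (norm_nonneg _) (norm_nonneg _)))
  -- J of the sequence lies in a compact set
  have hJcpt' : IsCompactOperator (J.toLinearMap : X →ₗ[ℝ] Z) := hJcpt
  have hK : IsCompact (closure (J.toLinearMap '' Metric.closedBall (0 : X) M)) :=
    hJcpt'.isCompact_closure_image_closedBall (𝕜₁ := ℝ) M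
  have hmem : ∀ n, J (x n) ∈ closure (J.toLinearMap '' Metric.closedBall (0 : X) M) := by
    intro n
    exact subset_closure ⟨x n, mem_closedBall_zero_iff.2 (hM n), rfl⟩
  obtain ⟨z, _, φ, hφ, hJconv⟩ := hK.tendsto_subseq hmem
  have hJc : CauchySeq fun n => J (x (φ n)) := hJconv.cauchySeq
  have hLc : CauchySeq fun n => L (x (φ n)) := hL.comp_tendsto hφ.tendsto_atTop
  have hxc : CauchySeq (x ∘ φ) := by
    rw [Metric.cauchySeq_iff] at hJc hLc ⊢
    intro ε hε
    have hδ : 0 < ε / (2 * C') := by positivity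
    obtain ⟨N₁, hN₁⟩ := hLc _ hδ
    obtain ⟨N₂, hN₂⟩ := hJc _ hδ
    refine ⟨max N₁ N₂, fun m hm n hn => ?_⟩
    have h1 := hN₁ m (le_trans (le_max_left _ _) hm) n (le_trans (le_max_left _ _) hn)
    have h2 := hN₂ m (le_trans (le_max_right _ _) hm) n (le_trans (le_max_right _ _) hn)
    rw [dist_eq_norm] at h1 h2 ⊢
    have key : ‖x (φ m) - x (φ n)‖ ≤ C' * (‖L (x (φ m)) - L (x (φ n))‖ +
        ‖J (x (φ m)) - J (x (φ n))‖) := by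
      have := hC' (x (φ m) - x (φ n))
      simpa [map_sub] using this
    calc ‖(x ∘ φ) m - (x ∘ φ) n‖
        ≤ C' * (‖L (x (φ m)) - L (x (φ n))‖ + ‖J (x (φ m)) - J (x (φ n))‖) := key
      _ < C' * (ε / (2 * C') + ε / (2 * C')) := by
          apply mul_lt_mul_of_pos_left _ hC'pos
          exact add_lt_add h1 h2
      _ = ε := by field_simp; ring
  obtain ⟨u, hu⟩ := cauchySeq_tendsto_of_complete hxc
  exact ⟨u, φ, hφ, hu⟩

/-- Peetre's lemma (forward direction): if `X` is compactly embedded into `Z` via `J`,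
`L : X → Y` is bounded linear, and the a priori estimate
`‖u‖_X ≤ C(‖L u‖_Y + ‖J u‖_Z)` holds, then `ker L` is finite-dimensional and
`range L` is closed. -/
theorem peetre_lemma_forward
    {X Y Z : Type*} [NormedAddCommGroup X] [NormedSpace ℝ X] [CompleteSpace X]
    [NormedAddCommGroup Y] [NormedSpace ℝ Y] [CompleteSpace Y]
    [NormedAddCommGroup Z] [NormedSpace ℝ Z] [CompleteSpace Z]
    (J : X →L[ℝ] Z) (hJinj : Function.Injective J) (hJcpt : IsCompactOperator J)
    (L : X →L[ℝ] Y) (C : ℝ)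
    (hC : ∀ u : X, ‖u‖ ≤ C * (‖L u‖ + ‖J u‖)) :
    FiniteDimensional ℝ (LinearMap.ker (L : X →ₗ[ℝ] Y)) ∧ IsClosed (Set.range L) := by
  have hkerClosed : IsClosed (LinearMap.ker (L : X →ₗ[ℝ] Y) : Set X) := ContinuousLinearMap.isClosed_ker L
  constructor
  · -- kernel is finite-dimensional
    apply FiniteDimensional.of_isCompact_closedBall₀ ℝ (r := 1) one_pos
    rw [isCompact_iff_isSeqCompact]
    intro x hx
    have hM : ∀ n, ‖((x n : X))‖ ≤ 1 := by
      intro n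
      have := hx n
      rw [mem_closedBall_zero_iff] at this
      simpa using this
    have hLzero : ∀ n, L ((x n : X)) = 0 := fun n => (LinearMap.mem_ker).1 (x n).2
    have hLcauchy : CauchySeq fun n => L ((x n : X)) := by
      simp only [hLzero]; exact cauchySeq_const 0
    obtain ⟨u, φ, hφ, hconv⟩ := peetre_key J hJcpt L C hC (fun n => (x n : X)) 1 hM hLcauchy
    have humem : u ∈ LinearMap.ker (L : X →ₗ[ℝ] Y) :=
      hkerClosed.mem_of_tendsto hconv (Filter.Eventually.of_forall fun n => (x (φ n)).2)
    have hunorm : ‖u‖ ≤ 1 :=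
      le_of_tendsto hconv.norm (Filter.Eventually.of_forall fun n => hM (φ n))
    refine ⟨⟨u, humem⟩, ?_, φ, hφ, ?_⟩
    · rw [mem_closedBall_zero_iff]
      simpa using hunorm
    · rw [tendsto_subtype_rng]
      exact hconv
  · -- range is closed
    apply IsSeqClosed.isClosed
    intro s p hmem htend
    choose v hv using hmem
    set N : Submodule ℝ X := LinearMap.ker (L : X →ₗ[ℝ] Y) with hN
    have hNne : (N : Set X).Nonempty := ⟨0, N.zero_mem⟩
    set d : ℕ → ℝ := fun n => Metric.infDist (v n) (N : Set X) with hd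
    have hw : ∀ n, ∃ w ∈ (N : Set X), dist (v n) w < d n + 1 := by
      intro n
      rw [← Metric.infDist_lt_iff hNne]
      linarith [Metric.infDist_nonneg (x := v n) (s := (N : Set X))]
    choose w hwmem hwdist using hw
    set u : ℕ → X := fun n => v n - w n with hu
    have hLu : ∀ n, L (u n) = s n := by
      intro n
      have hw0 : L (w n) = 0 := LinearMap.mem_ker.1 (hwmem n)
      simp [hu, map_sub, hw0, hv n]
    have hub : ∀ n, ‖u n‖ < d n + 1 := by
      intro n
      simpa [hu, dist_eq_norm] using hwdist n
    have hlb : ∀ n, ∀ c ∈ (N : Set X), d n ≤ ‖u n - c‖ := by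
      intro n c hc
      have : w n + c ∈ (N : Set X) := N.add_mem (hwmem n) hc
      have h := Metric.infDist_le_dist_of_mem (x := v n) this
      rw [dist_eq_norm] at h
      calc d n ≤ ‖v n - (w n + c)‖ := h
        _ = ‖u n - c‖ := by rw [hu]; congr 1; exact (sub_sub _ _ _).symm
    by_cases hb : ∃ M, ∃ᶠ n in atTop, ‖u n‖ ≤ M
    · -- bounded subsequence: extract limit, its image is p
      obtain ⟨M, hfreq⟩ := hb
      obtain ⟨φ, hφ, hφle⟩ := Filter.extraction_of_frequently_atTop hfreq
      have hLc : CauchySeq fun n => L (u (φ n)) := by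
        have : (fun n => L (u (φ n))) = s ∘ φ := by
          funext n; exact hLu (φ n)
        rw [this]
        exact (htend.comp hφ.tendsto_atTop).cauchySeq
      obtain ⟨u₀, ψ, hψ, hconv⟩ := peetre_key J hJcpt L C hC (fun n => u (φ n)) M
        (fun n => hφle n) hLc
      refine ⟨u₀, ?_⟩
      have h1 : Tendsto (fun n => L (u (φ (ψ n)))) atTop (𝓝 (L u₀)) :=
        (L.continuous.tendsto u₀).comp hconv
      have h2 : Tendsto (fun n => L (u (φ (ψ n)))) atTop (𝓝 p) := by
        have : (fun n => L (u (φ (ψ n)))) = s ∘ (φ ∘ ψ) := by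
          funext n; exact hLu (φ (ψ n))
        rw [this]
        exact htend.comp ((hφ.comp hψ).tendsto_atTop)
      exact tendsto_nhds_unique h1 h2
    · -- norms go to infinity: derive a contradiction
      exfalso
      push_neg at hb
      have htop : Tendsto (fun n => ‖u n‖) atTop atTop := by
        rw [Filter.tendsto_atTop]
        intro b
        have := hb b
        filter_upwards [this] with n hn
        exact le_of_lt hn
      set w' : ℕ → X := fun n => ‖u n‖⁻¹ • u n with hw'
      have hnorm1 : ∀ n, ‖w' n‖ ≤ 1 := by
        intro n
        rcases eq_or_ne (u n) 0 with h | h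
        · simp [hw', h]
        · rw [hw', norm_smul, norm_inv, norm_norm,
            inv_mul_cancel₀ (norm_ne_zero_iff.2 h)]
      have hLw : Tendsto (fun n => L (w' n)) atTop (𝓝 0) := by
        have heq : (fun n => L (w' n)) = fun n => ‖u n‖⁻¹ • s n := by
          funext n; rw [hw', map_smul, hLu n]
        rw [heq]
        have hinv : Tendsto (fun n => ‖u n‖⁻¹) atTop (𝓝 0) :=
          htop.inv_tendsto_atTop
        have := hinv.smul htend
        simpa using this
      obtain ⟨w₀, φ, hφ, hconv⟩ := peetre_key J hJcpt L C hC w' 1 hnorm1 hLw.cauchySeq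
      have hw₀mem : w₀ ∈ (N : Set X) := by
        have h1 : Tendsto (fun n => L (w' (φ n))) atTop (𝓝 (L w₀)) :=
          (L.continuous.tendsto w₀).comp hconv
        have h2 : Tendsto (fun n => L (w' (φ n))) atTop (𝓝 0) :=
          hLw.comp hφ.tendsto_atTop
        have : L w₀ = 0 := tendsto_nhds_unique h1 h2
        exact LinearMap.mem_ker.2 this
      -- eventually ‖w' (φ n) - w₀‖ ≥ 3/4
      have hbig : ∀ᶠ n in atTop, (4 : ℝ) ≤ ‖u (φ n)‖ :=
        (htop.comp hφ.tendsto_atTop).eventually_ge_atTop 4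
      have h34 : ∀ᶠ n in atTop, (3 : ℝ) / 4 ≤ ‖w' (φ n) - w₀‖ := by
        filter_upwards [hbig] with n hn
        set m := φ n
        have hpos : (0 : ℝ) < ‖u m‖ := lt_of_lt_of_le (by norm_num) hn
        have hne : u m ≠ 0 := norm_ne_zero_iff.1 (ne_of_gt hpos)
        have hsmem : ‖u m‖ • w₀ ∈ (N : Set X) := N.smul_mem _ hw₀mem
        have h1 : d m ≤ ‖u m - ‖u m‖ • w₀‖ := hlb m _ hsmem
        have heq : w' m - w₀ = ‖u m‖⁻¹ • (u m - ‖u m‖ • w₀) := by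
          rw [hw', smul_sub, smul_smul, inv_mul_cancel₀ (ne_of_gt hpos), one_smul]
        have h2 : ‖w' m - w₀‖ = ‖u m‖⁻¹ * ‖u m - ‖u m‖ • w₀‖ := by
          rw [heq, norm_smul, norm_inv, norm_norm]
        have h3 : ‖u m‖ - 1 ≤ d m := by linarith [hub m]
        have h4 : ‖u m‖⁻¹ * (‖u m‖ - 1) ≤ ‖w' m - w₀‖ := by
          rw [h2]
          apply mul_le_mul_of_nonneg_left (h3.trans h1) (by positivity)
        have h5 : (3 : ℝ) / 4 ≤ ‖u m‖⁻¹ * (‖u m‖ - 1) := by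
          rw [mul_sub, inv_mul_cancel₀ (ne_of_gt hpos), mul_one]
          have : ‖u m‖⁻¹ ≤ 1 / 4 := by
            rw [inv_le_comm₀ hpos (by norm_num)]
            linarith
          linarith
        linarith
      have hsmall : ∀ᶠ n in atTop, ‖w' (φ n) - w₀‖ < 3 / 4 := by
        have : Tendsto (fun n => ‖w' (φ n) - w₀‖) atTop (𝓝 0) := by
          rw [← tendsto_iff_norm_sub_tendsto_zero]
          exact hconv
        exact this.eventually_lt_const (by norm_num)
      obtain ⟨n, h1, h2⟩ := (h34.and hsmall).exists
      linarith
end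

section
/- Let X, Y, Z be Banach spaces with X compactly embedded into Z, and let L : X → Y be a bounded linear operator. If the kernel of L is finite-dimensional and the range of L is closed in Y, then there exists a constant C such that ‖u‖_X ≤ C(‖L u‖_Y + ‖u‖_Z) for all u ∈ X. -/
set_option maxHeartbeats 1000000
set_option synthInstance.maxHeartbeats 1000000


/-- Peetre's lemma (converse direction): if `ker L` is finite-dimensional and
`range L` is closed, then the a priori estimate
`‖u‖_X ≤ C(‖L u‖_Y + ‖J u‖_Z)` holds for some constant `C`, where `J` is the
compact embedding of `X` into `Z`. -/
theorem peetre_lemma_converse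
    {X Y Z : Type*} [NormedAddCommGroup X] [NormedSpace ℝ X] [CompleteSpace X]
    [NormedAddCommGroup Y] [NormedSpace ℝ Y] [CompleteSpace Y]
    [NormedAddCommGroup Z] [NormedSpace ℝ Z] [CompleteSpace Z]
    (J : X →L[ℝ] Z) (hJinj : Function.Injective J) (hJcpt : IsCompactOperator J)
    (L : X →L[ℝ] Y)
    (hker : FiniteDimensional ℝ (LinearMap.ker (L : X →ₗ[ℝ] Y)))
    (hrange : IsClosed (Set.range L)) :
    ∃ C : ℝ, ∀ u : X, ‖u‖ ≤ C * (‖L u‖ + ‖J u‖) := by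
  classical
  -- continuous projection onto the finite-dimensional kernel
  obtain ⟨f, hf⟩ := Submodule.ClosedComplemented.of_finiteDimensional (LinearMap.ker (L : X →ₗ[ℝ] Y))
  -- J is bounded below on the kernel
  obtain ⟨K, hK0, hK⟩ := LinearMap.exists_antilipschitzWith
      ((J.comp (LinearMap.ker (L : X →ₗ[ℝ] Y)).subtypeL).toLinearMap)
      (by
        rw [LinearMap.ker_eq_bot]
        intro a b hab
        exact Subtype.ext (hJinj hab))
  have hKer : ∀ k : LinearMap.ker (L : X →ₗ[ℝ] Y), ‖(k : X)‖ ≤ (K : ℝ) * ‖J (k : X)‖ := by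
    intro k
    have := hK.le_mul_dist k 0
    simpa [dist_eq_norm] using this
  -- the complementary projection
  set Q : X →L[ℝ] X :=
    ContinuousLinearMap.id ℝ X - (LinearMap.ker (L : X →ₗ[ℝ] Y)).subtypeL.comp f with hQ
  have hQapp : ∀ u : X, Q u = u - ((f u : X)) := fun u => rfl
  have hLQ : ∀ u : X, L (Q u) = L u := by
    intro u
    have : L ((f u : X)) = 0 := (f u).2
    simp [hQapp, map_sub, this]
  have hfQ : ∀ u : X, f (Q u) = 0 := by
    intro u
    have : f ((f u : X)) = f u := hf (f u)
    simp [hQapp, map_sub, this]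
  set G : Submodule ℝ X := LinearMap.ker (f : X →ₗ[ℝ] LinearMap.ker (L : X →ₗ[ℝ] Y)) with hG
  have hQG : ∀ u : X, Q u ∈ G := fun u => hfQ u
  have hGclosed : IsClosed (G : Set X) := ContinuousLinearMap.isClosed_ker f
  haveI : CompleteSpace G := hGclosed.completeSpace_coe
  set R : Submodule ℝ Y := LinearMap.range (L : X →ₗ[ℝ] Y) with hR
  have hRclosed : IsClosed (R : Set Y) := by
    rw [hR]
    simpa [LinearMap.coe_range] using hrange
  haveI : CompleteSpace R := hRclosed.completeSpace_coe
  -- the restriction of L to G, corestricted to its range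
  set Lg : G →L[ℝ] R :=
    (L.comp G.subtypeL).codRestrict R (fun g => LinearMap.mem_range_self _ _) with hLg
  have hinj : LinearMap.ker (Lg : G →ₗ[ℝ] R) = ⊥ := by
    rw [Submodule.eq_bot_iff]
    intro a ha
    have hab : Lg a = 0 := ha
    have h1 : L ((a : X)) = 0 := by
      have := congrArg (Subtype.val) hab
      exact this
    have hmem : (a : X) ∈ LinearMap.ker (L : X →ₗ[ℝ] Y) := h1
    have hfa : f ((a : X)) = 0 := a.2
    have h2 : ((f ((a : X)) : X)) = (a : X) := by
      rw [hf ⟨(a : X), hmem⟩]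
    rw [hfa] at h2
    exact Subtype.ext h2.symm
  have hsurj : LinearMap.range (Lg : G →ₗ[ℝ] R) = ⊤ := by
    rw [LinearMap.range_eq_top]
    rintro ⟨y, hy⟩
    obtain ⟨u, hu⟩ := hy
    refine ⟨⟨Q u, hQG u⟩, ?_⟩
    apply Subtype.ext
    simp only [hLg, ContinuousLinearMap.coe_codRestrict_apply,
      ContinuousLinearMap.coe_comp', Function.comp_apply,
      Submodule.coe_subtypeL', Submodule.coe_subtype]
    exact (hLQ u).trans hu
  -- the induced continuous linear equivalence (open mapping theorem)
  set e : G ≃L[ℝ] R := ContinuousLinearEquiv.ofBijective Lg hinj hsurj with he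
  set C₁ : ℝ := ‖(e.symm : R →L[ℝ] G)‖ with hC₁
  have hC₁0 : 0 ≤ C₁ := by rw [hC₁]; exact norm_nonneg (e.symm : R →L[ℝ] G)
  have hQbound : ∀ u : X, ‖Q u‖ ≤ C₁ * ‖L u‖ := by
    intro u
    set g : G := ⟨Q u, hQG u⟩ with hg
    have h1 : e.symm (e g) = g := e.symm_apply_apply g
    have h2 : ‖g‖ ≤ C₁ * ‖e g‖ := by
      calc ‖g‖ = ‖e.symm (e g)‖ := by rw [h1]
        _ ≤ C₁ * ‖e g‖ := (e.symm : R →L[ℝ] G).le_opNorm (e g)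
    have h3 : ‖e g‖ = ‖L u‖ := by
      have : e g = Lg g := rfl
      rw [this]
      have : ((Lg g : Y)) = L (Q u) := rfl
      show ‖(Lg g : Y)‖ = ‖L u‖
      rw [this, hLQ u]
    have h4 : ‖g‖ = ‖Q u‖ := rfl
    rw [h4, h3] at h2
    exact h2
  -- combine all the estimates
  refine ⟨C₁ + (K : ℝ) + (K : ℝ) * ‖J‖ * C₁, fun u => ?_⟩
  have hku : ‖((f u : X))‖ ≤ (K : ℝ) * ‖J ((f u : X))‖ := hKer (f u)
  have hJsplit : ‖J ((f u : X))‖ ≤ ‖J u‖ + ‖J‖ * (C₁ * ‖L u‖) := by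
    have h1 : ((f u : X)) = u - Q u := by rw [hQapp]; abel
    have h2 : ‖J ((f u : X))‖ ≤ ‖J u‖ + ‖J (Q u)‖ := by
      rw [h1, map_sub]
      exact norm_sub_le _ _
    have h3 : ‖J (Q u)‖ ≤ ‖J‖ * ‖Q u‖ := J.le_opNorm _
    have h4 : ‖J‖ * ‖Q u‖ ≤ ‖J‖ * (C₁ * ‖L u‖) :=
      mul_le_mul_of_nonneg_left (hQbound u) (norm_nonneg J)
    linarith
  have hsplit : ‖u‖ ≤ ‖Q u‖ + ‖((f u : X))‖ := by
    have : u = Q u + ((f u : X)) := by rw [hQapp]; abel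
    calc ‖u‖ = ‖Q u + ((f u : X))‖ := by rw [← this]
      _ ≤ ‖Q u‖ + ‖((f u : X))‖ := norm_add_le _ _
  have hQb := hQbound u
  have hK0' : (0 : ℝ) ≤ K := K.coe_nonneg
  have hJ0 : (0 : ℝ) ≤ ‖J‖ := norm_nonneg _
  have hLu : (0 : ℝ) ≤ ‖L u‖ := norm_nonneg _
  have hJu : (0 : ℝ) ≤ ‖J u‖ := norm_nonneg _
  nlinarith [mul_le_mul_of_nonneg_left hJsplit hK0', mul_nonneg hC₁0 hJu,
    mul_nonneg hK0' hLu, mul_nonneg (mul_nonneg (mul_nonneg hK0' hJ0) hC₁0) hJu]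
end
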